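/- arXiv:2307.03176 — 6 statements merged into one kernel-verified Lean document; each statement's English description precedes it below -/
import Mathlib

section
/- Let a > 0, α > 0, ν > 0 and λ > 0 be real numbers, and define X = sqrt((aα − aν + λν)² + 4aλν²), q = (X − aα + (a − λ)ν)/(2ν) and q̂ = (X + aα − (a + λ)ν)/(2aλ). Then q > 0, q̂ > 0, and the pair (q, q̂) satisfies the saddle-point equations q = aν/(ν + a·q̂) and q̂ = α/(λ + q). -/
/-- Replica saddle-point equations for feature-subsampled ridge regression on
equicorrelated data: the explicit pair `(q, q̂)` is positive and solves the system. -/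
theorem stmt_0 (a α ν lam : ℝ) (ha : 0 < a) (hα : 0 < α) (hν : 0 < ν) (hlam : 0 < lam) :
    let X := Real.sqrt ((a * α - a * ν + lam * ν) ^ 2 + 4 * a * lam * ν ^ 2)
    let q := (X - a * α + (a - lam) * ν) / (2 * ν)
    let qhat := (X + a * α - (a + lam) * ν) / (2 * a * lam)
    0 < q ∧ 0 < qhat ∧ q = a * ν / (ν + a * qhat) ∧ qhat = α / (lam + q) := by
  intro X q qhat
  have hs : (0:ℝ) ≤ (a * α - a * ν + lam * ν) ^ 2 + 4 * a * lam * ν ^ 2 := by positivity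
  have hX2 : X ^ 2 = (a * α - a * ν + lam * ν) ^ 2 + 4 * a * lam * ν ^ 2 :=
    Real.sq_sqrt hs
  have hX0 : 0 ≤ X := Real.sqrt_nonneg _
  have hq : 0 < q := by
    have h1 : a * α - (a - lam) * ν < X := by
      nlinarith [sq_nonneg (X - (a * α - a * ν + lam * ν)), mul_pos (mul_pos ha hlam) (by positivity : (0:ℝ) < ν ^ 2)]
    have : 0 < X - a * α + (a - lam) * ν := by linarith
    exact div_pos this (by positivity)
  have hqhat : 0 < qhat := by
    have h1 : (a + lam) * ν - a * α < X := by
      nlinarith [sq_nonneg (X - (a * ν + lam * ν - a * α)), mul_pos (mul_pos hlam hν) (mul_pos ha hα)]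
    have : 0 < X + a * α - (a + lam) * ν := by linarith
    exact div_pos this (by positivity)
  refine ⟨hq, hqhat, ?_, ?_⟩
  · have hden : 0 < ν + a * qhat := by positivity
    rw [eq_div_iff (ne_of_gt hden)]
    show (X - a * α + (a - lam) * ν) / (2 * ν) * (ν + a * ((X + a * α - (a + lam) * ν) / (2 * a * lam))) = a * ν
    field_simp
    ring_nf
    nlinarith [hX2, sq_nonneg X]
  · have hden : 0 < lam + q := by positivity
    rw [eq_div_iff (ne_of_gt hden)]
    show (X + a * α - (a + lam) * ν) / (2 * a * lam) * (lam + (X - a * α + (a - lam) * ν) / (2 * ν)) = α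
    field_simp
    ring_nf
    nlinarith [hX2, sq_nonneg X]
end

section
/- Let a > 0, α > 0, ν > 0 and λ > 0 be real numbers. Then the system of equations q = aν/(ν + a·q̂) and q̂ = α/(λ + q) has exactly one solution (q, q̂) with q > 0, namely q = (X − aα + (a − λ)ν)/(2ν) and q̂ = (X + aα − (a + λ)ν)/(2aλ) where X = sqrt((aα − aν + λν)² + 4aλν²). -/
/-- The replica saddle-point system `q = aν/(ν + a q̂)`, `q̂ = α/(λ + q)` has exactly one
solution with `q > 0`, given by the explicit formulas involving
`X = √((aα − aν + λν)² + 4aλν²)`. -/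
theorem stmt_1 (a α ν lam : ℝ) (ha : 0 < a) (hα : 0 < α) (hν : 0 < ν) (hlam : 0 < lam) :
    ∀ q qhat : ℝ,
      (0 < q ∧ q = a * ν / (ν + a * qhat) ∧ qhat = α / (lam + q)) ↔
      (q = (Real.sqrt ((a * α - a * ν + lam * ν) ^ 2 + 4 * a * lam * ν ^ 2)
              - a * α + (a - lam) * ν) / (2 * ν) ∧
       qhat = (Real.sqrt ((a * α - a * ν + lam * ν) ^ 2 + 4 * a * lam * ν ^ 2)
              + a * α - (a + lam) * ν) / (2 * a * lam)) := by
  intro q qhat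
  have hpos : (0:ℝ) < (a * α - a * ν + lam * ν) ^ 2 + 4 * a * lam * ν ^ 2 := by positivity
  set X := Real.sqrt ((a * α - a * ν + lam * ν) ^ 2 + 4 * a * lam * ν ^ 2) with hXdef
  have hX2 : X ^ 2 = (a * α - a * ν + lam * ν) ^ 2 + 4 * a * lam * ν ^ 2 :=
    Real.sq_sqrt hpos.le
  have hXpos : 0 < X := Real.sqrt_pos.mpr hpos
  -- X > |S| where S = aα − aν + λν
  have habs : |a * α - a * ν + lam * ν| < X := by
    rw [hXdef, ← Real.sqrt_sq_eq_abs]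
    exact Real.sqrt_lt_sqrt (sq_nonneg _) (by nlinarith [mul_pos (mul_pos ha hlam) (pow_pos hν 2)])
  obtain ⟨habs1, habs2⟩ := abs_lt.mp habs
  have hXgtS : a * α - a * ν + lam * ν < X := habs2
  have hXpS : 0 < X + (a * α - a * ν + lam * ν) := by linarith
  constructor
  · rintro ⟨hq, h1, h2⟩
    have hlq : 0 < lam + q := by linarith
    have hqhat : 0 < qhat := h2 ▸ div_pos hα hlq
    have hden : 0 < ν + a * qhat := by positivity
    have e1 : q * (ν + a * qhat) = a * ν := by
      rw [h1]; field_simp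
    have e2 : qhat * (lam + q) = α := by
      rw [h2]; field_simp
    have quad : ν * q ^ 2 + (a * α - a * ν + lam * ν) * q - a * ν * lam = 0 := by
      linear_combination (lam + q) * e1 - (a * q) * e2
    have key : (2 * ν * q + (a * α - a * ν + lam * ν) - X) *
        (2 * ν * q + (a * α - a * ν + lam * ν) + X) = 0 := by
      linear_combination 4 * ν * quad - hX2
    have hsum : 0 < 2 * ν * q + (a * α - a * ν + lam * ν) + X := by nlinarith
    have heq : 2 * ν * q + (a * α - a * ν + lam * ν) = X := by
      rcases mul_eq_zero.mp key with h | h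
      · linarith
      · linarith
    constructor
    · rw [eq_div_iff (by positivity : (2:ℝ) * ν ≠ 0)]
      linarith
    · have hd : 0 < X - (a * α - a * ν + lam * ν) + 2 * lam * ν := by nlinarith [mul_pos hlam hν]
      have e3 : qhat * (X - (a * α - a * ν + lam * ν) + 2 * lam * ν) = 2 * ν * α := by
        linear_combination 2 * ν * e2 - qhat * heq
      rw [eq_div_iff (by positivity : (2:ℝ) * a * lam ≠ 0)]
      apply mul_right_cancel₀ hd.ne'
      linear_combination (2 * a * lam) * e3 - hX2
  · rintro ⟨hq, hqhat⟩
    have hqpos : 0 < q := by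
      rw [hq]
      apply div_pos (by linarith) (by linarith)
    have hlq : 0 < lam + q := by linarith
    have hden : 0 < ν + a * qhat := by
      rw [hqhat]
      have : ν + a * ((X + a * α - (a + lam) * ν) / (2 * a * lam))
          = (X + (a * α - a * ν + lam * ν)) / (2 * lam) := by
        field_simp; ring
      rw [this]
      exact div_pos hXpS (by linarith)
    refine ⟨hqpos, ?_, ?_⟩
    · rw [eq_div_iff hden.ne']
      rw [hq, hqhat]
      field_simp
      linear_combination hX2
    · rw [eq_div_iff hlq.ne']
      rw [hq, hqhat]
      field_simp
      linear_combination hX2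
end

section
/- Fix real numbers a > 0, α > 0, ν > 0. For λ > 0 set X(λ) = sqrt((aα − aν + λν)² + 4aλν²), q̂(λ) = (X(λ) + aα − (a + λ)ν)/(2aλ), and S(λ) = q̂(λ)/(ν + a·q̂(λ)). Then the limit of S(λ) as λ → 0⁺ equals 2α/(a·(α + ν + |α − ν|)). -/
/-- Conjugate order parameter of the replica saddle-point equations. -/
noncomputable def qhatFun (a α ν lam : ℝ) : ℝ :=
  (Real.sqrt ((a * α - a * ν + lam * ν) ^ 2 + 4 * a * lam * ν ^ 2)
      + a * α - (a + lam) * ν) / (2 * a * lam)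

/-- Reduced resolvent factor `S(λ) = q̂(λ)/(ν + a·q̂(λ))`. -/
noncomputable def Sfun (a α ν lam : ℝ) : ℝ :=
  qhatFun a α ν lam / (ν + a * qhatFun a α ν lam)

lemma Sfun_eq (a α ν : ℝ) (ha : 0 < a) (hα : 0 < α) (hν : 0 < ν)
    (lam : ℝ) (hl : 0 < lam) :
    Sfun a α ν lam =
      2 * α / (Real.sqrt ((a * α - a * ν + lam * ν) ^ 2 + 4 * a * lam * ν ^ 2)
        - (a * α - a * ν - lam * ν) + 2 * a * α) := by
  set X := Real.sqrt ((a * α - a * ν + lam * ν) ^ 2 + 4 * a * lam * ν ^ 2) with hXdef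
  set B := a * α - a * ν - lam * ν with hBdef
  have hpos : 0 < 4 * a * lam * ν ^ 2 := by positivity
  have hX2 : X ^ 2 = (a * α - a * ν + lam * ν) ^ 2 + 4 * a * lam * ν ^ 2 :=
    Real.sq_sqrt (by positivity)
  have hXB : X ^ 2 - B ^ 2 = 4 * a * α * lam * ν := by
    rw [hX2, hBdef]; ring
  have hXgtB : B < X := by
    have h1 : |B| < X := by
      have : Real.sqrt (B ^ 2) < X := by
        rw [hXdef]
        apply Real.sqrt_lt_sqrt (by positivity)
        nlinarith
      rwa [Real.sqrt_sq_eq_abs] at this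
    exact lt_of_le_of_lt (le_abs_self B) h1
  have hXpB : 0 < X + B := by
    have h1 : -B ≤ |B| := neg_le_abs B
    have h2 : |B| < X := by
      have : Real.sqrt (B ^ 2) < X := by
        rw [hXdef]
        apply Real.sqrt_lt_sqrt (by positivity)
        nlinarith
      rwa [Real.sqrt_sq_eq_abs] at this
    linarith
  have hq : qhatFun a α ν lam = (X + B) / (2 * a * lam) := by
    rw [qhatFun, ← hXdef, hBdef]; ring
  have hqpos : 0 < qhatFun a α ν lam := by
    rw [hq]; positivity
  have hden1 : ν + a * qhatFun a α ν lam ≠ 0 :=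
    ne_of_gt (by nlinarith [mul_pos ha hqpos])
  have hden2 : X - B + 2 * a * α ≠ 0 :=
    ne_of_gt (by nlinarith [hXgtB, mul_pos ha hα])
  rw [Sfun, hq]
  rw [div_eq_div_iff (by rw [hq] at hden1; exact hden1) hden2]
  field_simp
  nlinarith [hXB, sq_nonneg (X + B)]

/-- Ridgeless limit of the reduced resolvent factor:
`S(λ) → 2α/(a(α + ν + |α − ν|))` as `λ → 0⁺`. -/
theorem stmt_3 (a α ν : ℝ) (ha : 0 < a) (hα : 0 < α) (hν : 0 < ν) :
    Filter.Tendsto (fun lam : ℝ => Sfun a α ν lam)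
      (nhdsWithin 0 (Set.Ioi 0)) (nhds (2 * α / (a * (α + ν + |α - ν|)))) := by
  set g : ℝ → ℝ := fun lam =>
    2 * α / (Real.sqrt ((a * α - a * ν + lam * ν) ^ 2 + 4 * a * lam * ν ^ 2)
      - (a * α - a * ν - lam * ν) + 2 * a * α) with hg
  have heq : ∀ lam ∈ Set.Ioi (0:ℝ), Sfun a α ν lam = g lam := fun lam hl =>
    Sfun_eq a α ν ha hα hν lam hl
  have habs : |α - ν| * a = |a * α - a * ν| := by
    have h : a * α - a * ν = a * (α - ν) := by ring
    rw [h, abs_mul, abs_of_pos ha]; ring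
  have hg0 : g 0 = 2 * α / (a * (α + ν + |α - ν|)) := by
    have : ((a * α - a * ν + 0 * ν) ^ 2 + 4 * a * 0 * ν ^ 2) = (a * α - a * ν) ^ 2 := by ring
    rw [hg]; simp only [this, Real.sqrt_sq_eq_abs]
    congr 1
    rw [← habs]; rcases abs_cases (α - ν) with ⟨h, _⟩ | ⟨h, _⟩ <;> rw [h] <;> ring
  have hne : Real.sqrt ((a * α - a * ν + 0 * ν) ^ 2 + 4 * a * 0 * ν ^ 2)
      - (a * α - a * ν - 0 * ν) + 2 * a * α ≠ 0 := by
    have : ((a * α - a * ν + 0 * ν) ^ 2 + 4 * a * 0 * ν ^ 2) = (a * α - a * ν) ^ 2 := by ring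
    rw [this, Real.sqrt_sq_eq_abs]
    have h1 : -(a * α - a * ν) ≤ |a * α - a * ν| := neg_le_abs _
    nlinarith
  have hcont : ContinuousAt g 0 := by
    apply ContinuousAt.div continuousAt_const
    · exact ((Real.continuous_sqrt.comp (by continuity)).sub (by continuity)
        |>.add continuous_const).continuousAt
    · exact hne
  have := hcont.tendsto.mono_left (nhdsWithin_le_nhds (s := Set.Ioi (0:ℝ)))
  rw [hg0] at this
  refine Filter.Tendsto.congr' ?_ this
  filter_upwards [self_mem_nhdsWithin] with lam hl using (heq lam hl).symm
end

section
/- Fix real numbers a > 0, b ≥ 0, q̂ > 0, and ν ∈ (0, 1]. For each M ∈ ℕ let N(M) ∈ ℕ with 1 ≤ N(M) ≤ M and N(M)/M → ν as M → ∞, and define the N(M)×N(M) real matrix Σ̃_M = (M/N(M))·(a·I + b·𝟙𝟙ᵀ), where 𝟙 is the all-ones vector in ℝ^{N(M)} and I the identity. Then (1/M)·tr[((I + q̂·Σ̃_M)⁻¹·Σ̃_M)²] → a²ν/(ν + a·q̂)² as M → ∞. -/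
open Matrix Filter

noncomputable def Jmat (n : ℕ) : Matrix (Fin n) (Fin n) ℝ := Matrix.of fun _ _ => 1

lemma J_mul_J (n : ℕ) : Jmat n * Jmat n = (n : ℝ) • Jmat n := by
  ext i j; simp [Jmat, Matrix.mul_apply]

lemma mul_form (n : ℕ) (x y u v : ℝ) :
    (x • (1 : Matrix (Fin n) (Fin n) ℝ) + y • Jmat n) * (u • 1 + v • Jmat n) =
      (x * u) • 1 + (x * v + y * u + y * v * n) • Jmat n := by
  simp only [add_mul, mul_add, smul_mul_assoc, mul_smul_comm, smul_smul, one_mul, mul_one,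
    J_mul_J, smul_add]
  module

lemma trace_form (n : ℕ) (x y : ℝ) :
    Matrix.trace (x • (1 : Matrix (Fin n) (Fin n) ℝ) + y • Jmat n) = x * n + y * n := by
  have hJ : Matrix.trace (Jmat n) = (n : ℝ) := by
    simp [Matrix.trace, Matrix.diag, Jmat]
  simp [Matrix.trace_add, Matrix.trace_smul, Matrix.trace_one, hJ, mul_comm]

lemma inv_form (n : ℕ) (α β : ℝ) (hα : α ≠ 0) (h2 : α + β * n ≠ 0) :
    (α • (1 : Matrix (Fin n) (Fin n) ℝ) + β • Jmat n)⁻¹ =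
      (1 / α) • 1 + (-β / (α * (α + β * n))) • Jmat n := by
  apply Matrix.inv_eq_right_inv
  rw [mul_form]
  have h1 : α * (1 / α) = 1 := by field_simp
  have hz : α * (-β / (α * (α + β * n))) + β * (1 / α) + β * (-β / (α * (α + β * n))) * n = 0 := by
    field_simp; ring
  rw [h1, hz]; simp


/-- The rescaled covariance `Σ̃ = (M/N)·(a·I + b·𝟙𝟙ᵀ)` of a subsampled set of `n = N(M)`
equicorrelated features. -/
noncomputable def sigmaTilde (a b : ℝ) (M n : ℕ) : Matrix (Fin n) (Fin n) ℝ :=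
  ((M : ℝ) / (n : ℝ)) •
    (a • (1 : Matrix (Fin n) (Fin n) ℝ) + b • Matrix.of (fun _ _ => (1 : ℝ)))

/-- Large-`M` limit of the squared resolvent trace appearing in the overlap parameter `γ`:
`(1/M)·tr[((I + q̂Σ̃)⁻¹Σ̃)²] → a²ν/(ν + a·q̂)²`. -/
theorem stmt_6 (a b qhat ν : ℝ) (ha : 0 < a) (hb : 0 ≤ b) (hq : 0 < qhat)
    (hν : ν ∈ Set.Ioc (0 : ℝ) 1) (N : ℕ → ℕ)
    (hN1 : ∀ M, 1 ≤ M → 1 ≤ N M) (hN2 : ∀ M, N M ≤ M)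
    (hNlim : Filter.Tendsto (fun M : ℕ => (N M : ℝ) / (M : ℝ)) Filter.atTop (nhds ν)) :
    Filter.Tendsto
      (fun M : ℕ =>
        (1 / (M : ℝ)) *
          Matrix.trace (((1 + qhat • sigmaTilde a b M (N M))⁻¹ * sigmaTilde a b M (N M)) ^ 2))
      Filter.atTop (nhds (a ^ 2 * ν / (ν + a * qhat) ^ 2)) := by
  obtain ⟨hν0, hν1⟩ := hν
  -- the simplified functions
  set c : ℕ → ℝ := fun M => a / ((N M : ℝ) / (M : ℝ) + qhat * a) with hc
  set e : ℕ → ℝ := fun M =>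
    (M : ℝ) * (a + b * (N M : ℝ)) / ((N M : ℝ) + qhat * (M : ℝ) * (a + b * (N M : ℝ))) with he
  set f : ℕ → ℝ := fun M => (((N M : ℝ) - 1) / (M : ℝ)) * (c M) ^ 2 + (e M) ^ 2 / (M : ℝ) with hf
  have hkey : ∀ᶠ M : ℕ in atTop,
      (1 / (M : ℝ)) *
          Matrix.trace (((1 + qhat • sigmaTilde a b M (N M))⁻¹ * sigmaTilde a b M (N M)) ^ 2)
        = f M := by
    filter_upwards [eventually_ge_atTop 1] with M hM
    set n := N M with hn
    have hn1 : 1 ≤ n := hN1 M hM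
    have hnpos : (0 : ℝ) < (n : ℝ) := by exact_mod_cast hn1
    have hMpos : (0 : ℝ) < (M : ℝ) := by
      have : (1:ℝ) ≤ (M:ℝ) := by exact_mod_cast hM
      linarith
    set r : ℝ := (M : ℝ) / (n : ℝ) with hr
    have hrpos : 0 < r := div_pos hMpos hnpos
    -- rewrite sigmaTilde in the I-J basis
    have hSig : sigmaTilde a b M n = (r * a) • (1 : Matrix (Fin n) (Fin n) ℝ) + (r * b) • Jmat n := by
      simp [sigmaTilde, Jmat, smul_add, smul_smul, hr]
    set α : ℝ := 1 + qhat * (r * a) with hα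
    set β : ℝ := qhat * (r * b) with hβ
    have hαpos : 0 < α := by positivity
    have hαn : 0 < α + β * n := by positivity
    have hres : (1 : Matrix (Fin n) (Fin n) ℝ) + qhat • ((r * a) • 1 + (r * b) • Jmat n)
        = α • 1 + β • Jmat n := by
      simp only [smul_add, smul_smul, hα, hβ]
      module
    rw [hSig, hres, inv_form n α β hαpos.ne' hαn.ne', sq, mul_form, mul_form, trace_form]
    -- now a real-number identity
    have hd1 : (N M : ℝ) / (M : ℝ) + qhat * a ≠ 0 := by positivity
    have hd2 : (n : ℝ) + qhat * (M : ℝ) * (a + b * (n : ℝ)) ≠ 0 := by positivity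
    set C := 1/α * (r*a) with hC
    set D := 1/α * (r*b) + -β/(α*(α+β*(n:ℝ))) * (r*a) + -β/(α*(α+β*(n:ℝ))) * (r*b) * (n:ℝ) with hD
    have hz1 : (1 + qhat * ((M:ℝ)/(n:ℝ) * a)) ≠ 0 := by positivity
    have hz2 : (1 + qhat * ((M:ℝ)/(n:ℝ) * a)) + qhat * ((M:ℝ)/(n:ℝ) * b) * (n:ℝ) ≠ 0 := by
      positivity
    have hCeq : C = a / ((n:ℝ)/(M:ℝ) + qhat * a) := by
      rw [hC, hα, hr]
      field_simp
      try ring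
    have hEeq : C + D * (n:ℝ)
        = (M:ℝ) * (a + b * (n:ℝ)) / ((n:ℝ) + qhat * (M:ℝ) * (a + b * (n:ℝ))) := by
      rw [hC, hD, hα, hβ, hr]
      field_simp
      try ring
    calc 1 / (M:ℝ) * (C * C * (n:ℝ) + (C * D + D * C + D * D * (n:ℝ)) * (n:ℝ))
        = (((n:ℝ) - 1) / (M:ℝ)) * C ^ 2 + (C + D * (n:ℝ)) ^ 2 / (M:ℝ) := by ring
      _ = f M := by
          rw [hEeq]
          try rw [hCeq]
          try simp only [hf, hc, he, ← hn]
  rw [show a ^ 2 * ν / (ν + a * qhat) ^ 2 = ν * (a / (ν + qhat * a)) ^ 2 + 0 by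
      have : ν + qhat * a ≠ 0 := by positivity
      field_simp; ring]
  apply Tendsto.congr' (hkey.mono fun M h => h.symm)
  apply Tendsto.add
  · have h1 : Tendsto (fun M : ℕ => ((N M : ℝ) - 1) / (M : ℝ)) atTop (nhds ν) := by
      have := hNlim.sub tendsto_one_div_atTop_nhds_zero_nat
      simpa [sub_div] using this
    have h2 : Tendsto c atTop (nhds (a / (ν + qhat * a))) := by
      have hne : ν + qhat * a ≠ 0 := by positivity
      exact (tendsto_const_nhds.div (hNlim.add tendsto_const_nhds) hne)
    simpa using h1.mul (h2.pow 2)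
  · -- e^2 / M → 0
    refine tendsto_of_tendsto_of_tendsto_of_le_of_le' (g := fun _ : ℕ => (0:ℝ))
      (h := fun M : ℕ => (1 / qhat) ^ 2 * (1 / (M : ℝ))) tendsto_const_nhds ?_ ?_ ?_
    · have := tendsto_one_div_atTop_nhds_zero_nat.const_mul ((1 / qhat) ^ 2)
      simpa using this
    · filter_upwards [eventually_ge_atTop 1] with M hM
      have hMpos : (0 : ℝ) < (M : ℝ) := by
        have : (1:ℝ) ≤ (M:ℝ) := by exact_mod_cast hM
        linarith
      have hnpos : (0 : ℝ) < (N M : ℝ) := by exact_mod_cast hN1 M hM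
      have : 0 ≤ e M := by
        apply div_nonneg
        · positivity
        · positivity
      positivity
    · filter_upwards [eventually_ge_atTop 1] with M hM
      have hMpos : (0 : ℝ) < (M : ℝ) := by
        have : (1:ℝ) ≤ (M:ℝ) := by exact_mod_cast hM
        linarith
      have hnpos : (0 : ℝ) < (N M : ℝ) := by exact_mod_cast hN1 M hM
      have hX : 0 < (M : ℝ) * (a + b * (N M : ℝ)) := by positivity
      have hden : qhat * ((M : ℝ) * (a + b * (N M : ℝ)))
          ≤ (N M : ℝ) + qhat * (M : ℝ) * (a + b * (N M : ℝ)) := by nlinarith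
      have hebound : e M ≤ 1 / qhat := by
        rw [he]
        rw [div_le_div_iff₀ (by positivity) hq]
        nlinarith
      have henn : 0 ≤ e M := by
        apply div_nonneg <;> positivity
      have : (e M) ^ 2 ≤ (1 / qhat) ^ 2 := by nlinarith
      calc (e M) ^ 2 / (M : ℝ) ≤ (1 / qhat) ^ 2 / (M : ℝ) := by gcongr
        _ = (1 / qhat) ^ 2 * (1 / (M : ℝ)) := by ring
end

section
/- Fix s > 0, ζ ≥ 0, η ≥ 0, and ν ∈ (0,1], and suppose λ* := (ζ² + η²)/ν + s·(1 − ν)/ν is strictly positive. For λ > 0 and α > 0 define X(λ) = sqrt((sα − sν + λν)² + 4sλν²), q̂(λ) = (X(λ) + sα − (s + λ)ν)/(2sλ), S(λ) = q̂(λ)/(ν + s·q̂(λ)), γ(λ) = s²νS(λ)²/α, I(λ) = s·(1 − 2sνS(λ) + s²νS(λ)²), and the diagonal error E(λ) = (I(λ) + γ(λ)ζ² + η²)/(1 − γ(λ)). Then for every α > 0 the derivative of E with respect to λ vanishes at λ = λ*; in particular the locally optimal regularization λ* is independent of the sample ratio α. -/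
/-- Overlap parameter `γ(λ) = a²νS(λ)²/α`. -/
noncomputable def gammaFun (a α ν lam : ℝ) : ℝ :=
  a ^ 2 * ν * Sfun a α ν lam ^ 2 / α

/-- The locally optimal regularization `λ* = (ζ² + η²)/ν + s(1 − ν)/ν` for isotropic data
(`c = 0`, `ω = 0`, data scale `s`): the derivative of the diagonal generalization error with
respect to `λ` vanishes at `λ = λ*`, for every sample ratio `α > 0`; in particular `λ*` is
independent of `α`. -/
theorem stmt_15 (s ζ η ν : ℝ) (hs : 0 < s) (hζ : 0 ≤ ζ) (hη : 0 ≤ η)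
    (hν : ν ∈ Set.Ioc (0 : ℝ) 1)
    (hpos : 0 < (ζ ^ 2 + η ^ 2) / ν + s * (1 - ν) / ν) :
    ∀ α > 0,
      HasDerivAt
        (fun lam : ℝ =>
          (s * (1 - 2 * s * ν * Sfun s α ν lam + s ^ 2 * ν * Sfun s α ν lam ^ 2)
              + gammaFun s α ν lam * ζ ^ 2 + η ^ 2) / (1 - gammaFun s α ν lam))
        0 ((ζ ^ 2 + η ^ 2) / ν + s * (1 - ν) / ν) := by
  obtain ⟨hν0, hν1⟩ := hν
  intro α hα
  set L : ℝ := (ζ ^ 2 + η ^ 2) / ν + s * (1 - ν) / ν with hL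
  have hL0 : 0 < L := hpos
  clear_value L
  have hνL : ν * L = ζ ^ 2 + η ^ 2 + s * (1 - ν) := by
    rw [hL]; field_simp
  -- the discriminant and its square root
  have hd : (0:ℝ) < (s * α - s * ν + L * ν) ^ 2 + 4 * s * L * ν ^ 2 := by positivity
  set e : ℝ := Real.sqrt ((s * α - s * ν + L * ν) ^ 2 + 4 * s * L * ν ^ 2) with hedef
  clear_value e
  have he2 : e ^ 2 = (s * α - s * ν + L * ν) ^ 2 + 4 * s * L * ν ^ 2 := by
    rw [hedef]; exact Real.sq_sqrt hd.le
  have habs : |s * α - (s + L) * ν| < e := by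
    rw [hedef, ← Real.sqrt_sq_eq_abs]
    apply Real.sqrt_lt_sqrt (sq_nonneg _)
    nlinarith [mul_pos (mul_pos hL0 hν0) (mul_pos hs hα)]
  -- the order parameter at λ = L
  set q0 : ℝ := qhatFun s α ν L with hq0set
  clear_value q0
  have hq0 : q0 = (e + (s * α - (s + L) * ν)) / (2 * s * L) := by
    rw [hq0set, qhatFun, hedef]; ring
  have hq0pos : 0 < q0 := by
    rw [hq0]
    apply div_pos _ (by positivity)
    have := (abs_lt.mp habs).1
    linarith
  have hqe : q0 * (2 * s * L) = e + (s * α - (s + L) * ν) := by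
    rw [hq0]; field_simp
  have hRmul : (s * L * q0 ^ 2 + (s * ν + L * ν - s * α) * q0 - α * ν) * (4 * s * L) = 0 := by
    linear_combination (q0 * (2 * s * L) + e - (s * α - (s + L) * ν)) * hqe + he2
  have hR : s * L * q0 ^ 2 + (s * ν + L * ν - s * α) * q0 - α * ν = 0 :=
    (mul_eq_zero.mp hRmul).resolve_right (by positivity)
  have hu : 0 < ν + s * q0 := by positivity
  -- the resolvent factor at λ = L
  set t : ℝ := Sfun s α ν L with htset
  clear_value t
  have htdef : t = q0 / (ν + s * q0) := by
    rw [htset, Sfun, hq0set]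
  have htu : t * (ν + s * q0) = q0 := by
    rw [htdef]; field_simp
  have ht0 : 0 < t := by rw [htdef]; exact div_pos hq0pos hu
  have hst : s * t < 1 := by
    rw [htdef, ← mul_div_assoc, div_lt_one hu]
    linarith
  have hst' : 0 < 1 - s * t := by linarith
  -- the implicit equation satisfied by t
  have hT2 : (ν * t * L + ν * s * t - ν * s ^ 2 * t ^ 2 - α + α * s * t)
      * (ν + s * q0) ^ 2 = 0 := by
    linear_combination
      (ν * L * (ν + s * q0) + ν * s * (ν + s * q0) + α * s * (ν + s * q0)
        - ν * s ^ 2 * (t * (ν + s * q0) + q0)) * htu + ν * hR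
  have hT' : ν * t * L + ν * s * t - ν * s ^ 2 * t ^ 2 - α + α * s * t = 0 :=
    (mul_eq_zero.mp hT2).resolve_right (pow_ne_zero 2 hu.ne')
  have hT : t * (ζ ^ 2 + η ^ 2 + s) - s ^ 2 * ν * t ^ 2 - α + α * s * t = 0 := by
    linear_combination hT' - t * hνL
  -- γ < 1 at λ = L
  have h3 : (α - s ^ 2 * ν * t ^ 2) * (1 - s * t)
      = ν * L * t + ν * s * t * (1 - s * t) ^ 2 := by
    linear_combination (-1 : ℝ) * hT'
  have h4 : 0 < ν * L * t + ν * s * t * (1 - s * t) ^ 2 :=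
    add_pos_of_pos_of_nonneg (mul_pos (mul_pos hν0 hL0) ht0)
      (mul_nonneg (mul_nonneg (mul_nonneg hν0.le hs.le) ht0.le) (sq_nonneg _))
  have hpos2 : 0 < (α - s ^ 2 * ν * t ^ 2) * (1 - s * t) := h3 ▸ h4
  have hα1 : s ^ 2 * ν * t ^ 2 < α := by
    rcases mul_pos_iff.mp hpos2 with ⟨h5, _⟩ | ⟨_, h6⟩
    · linarith
    · linarith
  have hden0 : (0:ℝ) < 1 - s ^ 2 * ν * t ^ 2 / α := by
    rw [sub_pos, div_lt_one hα]; exact hα1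
  -- differentiability of Sfun at L
  have hPdiff : DifferentiableAt ℝ
      (fun lam : ℝ => (s * α - s * ν + lam * ν) ^ 2 + 4 * s * lam * ν ^ 2) L := by
    fun_prop
  have hsqrtdiff : DifferentiableAt ℝ
      (fun lam : ℝ =>
        Real.sqrt ((s * α - s * ν + lam * ν) ^ 2 + 4 * s * lam * ν ^ 2)) L :=
    hPdiff.sqrt hd.ne'
  have hqdiff : DifferentiableAt ℝ (fun lam : ℝ => qhatFun s α ν lam) L := by
    simp only [qhatFun]
    apply DifferentiableAt.div
    · fun_prop
    · fun_prop
    · have : (0:ℝ) < 2 * s * L := by positivity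
      exact this.ne'
  have hSdiff : DifferentiableAt ℝ (fun lam : ℝ => Sfun s α ν lam) L := by
    simp only [Sfun]
    exact hqdiff.div (by fun_prop) (by rw [← hq0set]; exact hu.ne')
  set S' : ℝ := deriv (fun lam : ℝ => Sfun s α ν lam) L with hS'def
  clear_value S'
  have hS : HasDerivAt (fun lam : ℝ => Sfun s α ν lam) S' L := by
    rw [hS'def]; exact hSdiff.hasDerivAt
  -- assemble the derivative of the error
  have hS2 : HasDerivAt (fun lam : ℝ => Sfun s α ν lam ^ 2)
      ((2 : ℕ) * Sfun s α ν L ^ 1 * S') L := hS.pow 2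
  have hA : HasDerivAt (fun lam : ℝ =>
      1 - 2 * s * ν * Sfun s α ν lam + s ^ 2 * ν * Sfun s α ν lam ^ 2)
      (-(2 * s * ν * S') + s ^ 2 * ν * ((2 : ℕ) * Sfun s α ν L ^ 1 * S')) L :=
    ((hS.const_mul (2 * s * ν)).const_sub 1).add (hS2.const_mul (s ^ 2 * ν))
  have hnum : HasDerivAt (fun lam : ℝ =>
      s * (1 - 2 * s * ν * Sfun s α ν lam + s ^ 2 * ν * Sfun s α ν lam ^ 2)
        + s ^ 2 * ν * Sfun s α ν lam ^ 2 / α * ζ ^ 2 + η ^ 2)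
      (s * (-(2 * s * ν * S') + s ^ 2 * ν * ((2 : ℕ) * Sfun s α ν L ^ 1 * S'))
        + s ^ 2 * ν * ((2 : ℕ) * Sfun s α ν L ^ 1 * S') / α * ζ ^ 2) L :=
    ((hA.const_mul s).add
      (((hS2.const_mul (s ^ 2 * ν)).div_const α).mul_const (ζ ^ 2))).add_const (η ^ 2)
  have hden : HasDerivAt (fun lam : ℝ => 1 - s ^ 2 * ν * Sfun s α ν lam ^ 2 / α)
      (-(s ^ 2 * ν * ((2 : ℕ) * Sfun s α ν L ^ 1 * S') / α)) L :=
    ((hS2.const_mul (s ^ 2 * ν)).div_const α).const_sub 1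
  have hdenne : (1 - s ^ 2 * ν * Sfun s α ν L ^ 2 / α) ≠ 0 := by
    rw [← htset]; exact hden0.ne'
  have H := hnum.div hden hdenne
  simp only [gammaFun]
  convert H using 1
  case e'_4 => rfl
  case e'_5 => rfl
  case e'_8 => rfl
  rw [eq_comm, div_eq_zero_iff]
  left
  rw [← htset]
  push_cast
  have hαinv : α * α⁻¹ = 1 := mul_inv_cancel₀ hα.ne'
  linear_combination (2 * s ^ 2 * ν * S' / α) * hT
    + (2 * s ^ 2 * ν * S' * (1 - s * t)) * hαinv
end

section
/- Fix s > 0, λ > 0, ζ ≥ 0, η ≥ 0, k ∈ ℕ with k ≥ 1, and subsampling fractions ν₁, …, ν_k ∈ (0,1]. For α > 0 and r = 1,…,k define X_r(α) = sqrt((sα − sν_r + λν_r)² + 4sλν_r²), q̂_r(α) = (X_r(α) + sα − (s + λ)ν_r)/(2sλ), S_r(α) = q̂_r(α)/(ν_r + s·q̂_r(α)), γ_r(α) = s²ν_rS_r(α)²/α, and the ensemble generalization error E_g(α) = (1/k²)·[ Σ_{r=1}^k (s(1 − 2sν_rS_r(α) + s²ν_rS_r(α)²) + γ_r(α)ζ²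 + η²)/(1 − γ_r(α)) + Σ_{r ≠ r'} s(1 − sν_rS_r(α) − sν_{r'}S_{r'}(α)) ]. Then E_g(α) → s·(1 − (2 − 1/k)·(1/k)Σ_{r=1}^k ν_r) + η²/k as α → ∞. In particular, in the infinite-data limit the error depends on the subsampling fractions only through their mean. -/
open Filter Topology Finset

lemma qhat_atTop (s lam ν : ℝ) (hs : 0 < s) (hlam : 0 < lam) :
    Tendsto (fun α => qhatFun s α ν lam) atTop atTop := by
  have hc : (0:ℝ) < 2 * s * lam := by positivity
  have h1 : Tendsto (fun α : ℝ => (s * α - (s + lam) * ν) / (2 * s * lam)) atTop atTop := by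
    apply Tendsto.atTop_div_const hc
    apply tendsto_atTop_add_const_right
    exact Tendsto.const_mul_atTop hs tendsto_id
  refine tendsto_atTop_mono (fun α => ?_) h1
  unfold qhatFun
  have := Real.sqrt_nonneg ((s * α - s * ν + lam * ν) ^ 2 + 4 * s * lam * ν ^ 2)
  gcongr
  linarith

lemma frac_lim (s ν : ℝ) (hs : 0 < s) (hν : 0 < ν) :
    Tendsto (fun q : ℝ => q / (ν + s * q)) atTop (nhds s⁻¹) := by
  have h : Tendsto (fun q : ℝ => (ν * q⁻¹ + s)⁻¹) atTop (nhds s⁻¹) := by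
    apply Tendsto.inv₀ _ hs.ne'
    simpa using (tendsto_inv_atTop_zero.const_mul ν).add_const s
  refine h.congr' ?_
  filter_upwards [eventually_gt_atTop 0] with q hq
  have h1 : ν + s * q > 0 := by positivity
  field_simp

lemma S_lim (s lam ν : ℝ) (hs : 0 < s) (hlam : 0 < lam) (hν : 0 < ν) :
    Tendsto (fun α => Sfun s α ν lam) atTop (nhds s⁻¹) := by
  have := (frac_lim s ν hs hν).comp (qhat_atTop s lam ν hs hlam)
  simpa [Sfun, Function.comp_def] using this

lemma gamma_lim (s lam ν : ℝ) (hs : 0 < s) (hlam : 0 < lam) (hν : 0 < ν) :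
    Tendsto (fun α => gammaFun s α ν lam) atTop (nhds 0) := by
  have hnum : Tendsto (fun α => s ^ 2 * ν * Sfun s α ν lam ^ 2) atTop
      (nhds (s ^ 2 * ν * (s⁻¹) ^ 2)) :=
    (((S_lim s lam ν hs hlam hν).pow 2).const_mul _)
  simpa [gammaFun] using hnum.div_atTop tendsto_id

lemma sum_ite_ne {k : ℕ} (c : Fin k → ℝ) (r : Fin k) :
    ∑ r' : Fin k, (if r ≠ r' then c r' else 0) = (∑ r' : Fin k, c r') - c r := by
  have h1 : ∑ r' : Fin k, (if r ≠ r' then c r' else 0)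
      = ∑ r' : Fin k, (c r' - if r = r' then c r' else 0) := by
    refine Finset.sum_congr rfl fun x _ => ?_
    by_cases h : r = x <;> simp [h]
  rw [h1, Finset.sum_sub_distrib, Finset.sum_ite_eq]
  simp

/-- Infinite-data limit of the generalization error of an ensemble of `k` ridge-trained
linear predictors with mutually exclusive feature subsets on isotropic data: as `α → ∞`,
`E_g(α) → s(1 − (2 − 1/k)·(mean of ν_r)) + η²/k`, depending on the subsampling fractions
only through their mean. -/
theorem stmt_16 (s lam ζ η : ℝ) (hs : 0 < s) (hlam : 0 < lam) (hζ : 0 ≤ ζ) (hη : 0 ≤ η)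
    (k : ℕ) (hk : 1 ≤ k) (ν : Fin k → ℝ) (hν : ∀ r, ν r ∈ Set.Ioc (0 : ℝ) 1) :
    Filter.Tendsto
      (fun α : ℝ =>
        (1 / (k : ℝ) ^ 2) *
          ((∑ r : Fin k,
              (s * (1 - 2 * s * ν r * Sfun s α (ν r) lam
                    + s ^ 2 * ν r * Sfun s α (ν r) lam ^ 2)
                  + gammaFun s α (ν r) lam * ζ ^ 2 + η ^ 2) /
                (1 - gammaFun s α (ν r) lam)) +
            ∑ r : Fin k, ∑ r' : Fin k,
              if r ≠ r' then
                s * (1 - s * ν r * Sfun s α (ν r) lam - s * ν r' * Sfun s α (ν r') lam)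
              else 0))
      Filter.atTop
      (nhds (s * (1 - (2 - 1 / (k : ℝ)) * ((1 / (k : ℝ)) * ∑ r : Fin k, ν r))
        + η ^ 2 / (k : ℝ))) := by
  have hkR : (0:ℝ) < (k:ℝ) := by exact_mod_cast hk
  have hS : ∀ r : Fin k, Tendsto (fun α => Sfun s α (ν r) lam) atTop (nhds s⁻¹) :=
    fun r => S_lim s lam (ν r) hs hlam (hν r).1
  have hγ : ∀ r : Fin k, Tendsto (fun α => gammaFun s α (ν r) lam) atTop (nhds 0) :=
    fun r => gamma_lim s lam (ν r) hs hlam (hν r).1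
  -- diagonal terms
  have hD : ∀ r : Fin k, Tendsto
      (fun α => (s * (1 - 2 * s * ν r * Sfun s α (ν r) lam
            + s ^ 2 * ν r * Sfun s α (ν r) lam ^ 2)
          + gammaFun s α (ν r) lam * ζ ^ 2 + η ^ 2) / (1 - gammaFun s α (ν r) lam))
      atTop (nhds (s * (1 - ν r) + η ^ 2)) := by
    intro r
    have hnum : Tendsto
        (fun α => s * (1 - 2 * s * ν r * Sfun s α (ν r) lam
            + s ^ 2 * ν r * Sfun s α (ν r) lam ^ 2)
          + gammaFun s α (ν r) lam * ζ ^ 2 + η ^ 2) atTop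
        (nhds (s * (1 - 2 * s * ν r * s⁻¹ + s ^ 2 * ν r * (s⁻¹) ^ 2) + 0 * ζ ^ 2 + η ^ 2)) := by
      exact ((((tendsto_const_nhds.sub (((hS r).const_mul _))).add
        (((hS r).pow 2).const_mul _)).const_mul s).add ((hγ r).mul_const _)).add tendsto_const_nhds
    have hden : Tendsto (fun α => 1 - gammaFun s α (ν r) lam) atTop (nhds (1 - 0)) :=
      tendsto_const_nhds.sub (hγ r)
    have := hnum.div hden (by norm_num)
    have e : (s * (1 - 2 * s * ν r * s⁻¹ + s ^ 2 * ν r * (s⁻¹) ^ 2) + 0 * ζ ^ 2 + η ^ 2) / (1 - 0)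
        = s * (1 - ν r) + η ^ 2 := by
      field_simp <;> ring
    rw [e] at this
    exact this
  -- off-diagonal terms
  have hO : ∀ r r' : Fin k, Tendsto
      (fun α => if r ≠ r' then
          s * (1 - s * ν r * Sfun s α (ν r) lam - s * ν r' * Sfun s α (ν r') lam) else 0)
      atTop (nhds (if r ≠ r' then s * (1 - ν r - ν r') else 0)) := by
    intro r r'
    by_cases h : r = r'
    · simp [h]
    · simp only [if_neg (by simpa using h), ne_eq, h, not_false_eq_true, if_pos]
      have : Tendsto (fun α => s * (1 - s * ν r * Sfun s α (ν r) lam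
          - s * ν r' * Sfun s α (ν r') lam)) atTop
          (nhds (s * (1 - s * ν r * s⁻¹ - s * ν r' * s⁻¹))) :=
        ((tendsto_const_nhds.sub ((hS r).const_mul _)).sub
          ((hS r').const_mul _)).const_mul s
      convert this using 2
      field_simp
  have htot : Tendsto
      (fun α : ℝ =>
        (1 / (k : ℝ) ^ 2) *
          ((∑ r : Fin k,
              (s * (1 - 2 * s * ν r * Sfun s α (ν r) lam
                    + s ^ 2 * ν r * Sfun s α (ν r) lam ^ 2)
                  + gammaFun s α (ν r) lam * ζ ^ 2 + η ^ 2) /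
                (1 - gammaFun s α (ν r) lam)) +
            ∑ r : Fin k, ∑ r' : Fin k,
              if r ≠ r' then
                s * (1 - s * ν r * Sfun s α (ν r) lam - s * ν r' * Sfun s α (ν r') lam)
              else 0))
      atTop
      (nhds ((1 / (k : ℝ) ^ 2) *
        ((∑ r : Fin k, (s * (1 - ν r) + η ^ 2)) +
          ∑ r : Fin k, ∑ r' : Fin k, if r ≠ r' then s * (1 - ν r - ν r') else 0))) := by
    exact ((tendsto_finset_sum _ fun r _ => hD r).add
      (tendsto_finset_sum _ fun r _ => tendsto_finset_sum _ fun r' _ => hO r r')).const_mul _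
  convert htot using 2
  have h2 : ∀ r : Fin k, ∑ r' : Fin k, (if r ≠ r' then s * (1 - ν r - ν r') else 0)
      = (∑ r' : Fin k, s * (1 - ν r - ν r')) - s * (1 - ν r - ν r) :=
    fun r => sum_ite_ne (fun r' => s * (1 - ν r - ν r')) r
  simp only [h2]
  have hN : ∀ r : Fin k, ∑ r' : Fin k, s * (1 - ν r - ν r')
      = (k:ℝ) * (s * (1 - ν r)) - s * ∑ r' : Fin k, ν r' := by
    intro r
    rw [Finset.sum_congr rfl (fun r' _ => by ring :
      ∀ r' ∈ Finset.univ, s * (1 - ν r - ν r') = s * (1 - ν r) - s * ν r'),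
      Finset.sum_sub_distrib, ← Finset.mul_sum, Finset.sum_const, Finset.card_univ]
    rw [← Finset.mul_sum]
    simp only [Fintype.card_fin]
    ring
  simp only [hN]
  rw [Finset.sum_add_distrib, Finset.sum_sub_distrib, Finset.sum_sub_distrib,
    ← Finset.mul_sum, Finset.sum_const, Finset.card_univ, Finset.mul_sum]
  simp only [mul_sub, mul_one, Finset.sum_sub_distrib, Finset.sum_const, Finset.card_univ,
    Fintype.card_fin, nsmul_eq_mul, ← Finset.mul_sum]
  field_simp
  ring
end
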